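/- arXiv:1309.3085 — 3 statements merged into one kernel-verified Lean document; each statement's English description precedes it below -/
import Mathlib

section
/- Let V : ℝ^N → ℝ be C², G = ‖∇V‖² > 0, and suppose q(s) satisfies dq^i/ds = ∂V/∂q^i(q(s)) and ν(s) satisfies dν/ds = G(q(s)). Then (q(s), ν(s)) satisfies the geodesic equations of the metric diag(1,…,1,−1/G): namely d²ν/ds² − (2/G) (dν/ds) Σ_j (dq^j/ds) H_j = 0 and d²q^i/ds² − (H_i/G²)(dν/ds)² = 0 for all i, where H_i = Σ_k (∂V/∂q^k)(∂²V/∂q^k∂q^i). -/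
open scoped BigOperators

/-- Partial derivative of `f : ℝ^N → ℝ` in direction `i`. -/
noncomputable def pd {N : ℕ} (f : (Fin N → ℝ) → ℝ) (i : Fin N) (q : Fin N → ℝ) : ℝ :=
  fderiv ℝ f q (Pi.single i 1)

/-- Second partial derivative `∂²f/∂q^i∂q^j`. -/
noncomputable def pd2 {N : ℕ} (f : (Fin N → ℝ) → ℝ) (i j : Fin N) (q : Fin N → ℝ) : ℝ :=
  pd (fun x => pd f j x) i q


/-- `H_i(q) = Σ_k (∂V/∂q^k)(∂²V/∂q^k∂q^i)`, the product of the Hessian with the gradient. -/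
noncomputable def Hvec {N : ℕ} (V : (Fin N → ℝ) → ℝ) (i : Fin N) (q : Fin N → ℝ) : ℝ :=
  ∑ k, pd V k q * pd2 V k i q

lemma pd_contDiff {N : ℕ} (V : (Fin N → ℝ) → ℝ) (hV : ContDiff ℝ 2 V) (i : Fin N) :
    ContDiff ℝ 1 (pd V i) := by
  have h1 : ContDiff ℝ 1 (fderiv ℝ V) := hV.fderiv_right (by norm_num)
  exact h1.clm_apply contDiff_const

lemma fderiv_pd_apply {N : ℕ} (V : (Fin N → ℝ) → ℝ) (hV : ContDiff ℝ 2 V) (i : Fin N)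
    (x : Fin N → ℝ) (v : Fin N → ℝ) :
    fderiv ℝ (pd V i) x v = ∑ k, v k * pd2 V k i x := by
  have hv : v = ∑ k, v k • (Pi.single k (1 : ℝ) : Fin N → ℝ) := by
    funext j
    simp [Finset.sum_apply, Pi.single_apply]
  conv_lhs => rw [hv]
  rw [map_sum]
  refine Finset.sum_congr rfl fun k _ => ?_
  rw [map_smul]
  rfl

/-- Steepest-ascent curves, together with `dν/ds = G(q(s))`, satisfy the geodesic
equations of the metric `diag(1,…,1,−1/G)` with `G = ‖∇V‖²`. -/
theorem steepest_ascent_is_geodesic {N : ℕ} (V : (Fin N → ℝ) → ℝ)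
    (hV : ContDiff ℝ 2 V) (G : (Fin N → ℝ) → ℝ)
    (hG : G = fun q => ∑ i, (pd V i q) ^ 2)
    (hpos : ∀ q, 0 < G q)
    (q : ℝ → Fin N → ℝ) (ν : ℝ → ℝ)
    (hq : ∀ s, HasDerivAt q (fun i => pd V i (q s)) s)
    (hν : ∀ s, HasDerivAt ν (G (q s)) s) :
    ∀ s : ℝ,
      (deriv (deriv ν) s
          - (2 / G (q s)) * deriv ν s
              * (∑ j, deriv (fun t => q t j) s * Hvec V j (q s)) = 0) ∧
      (∀ i : Fin N,
        deriv (deriv fun t => q t i) s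
          - (Hvec V i (q s) / (G (q s)) ^ 2) * (deriv ν s) ^ 2 = 0) := by
  intro s
  -- derivative of each component
  have hqi : ∀ (i : Fin N) (t : ℝ), HasDerivAt (fun u => q u i) (pd V i (q t)) t :=
    fun i t => (hasDerivAt_pi.mp (hq t)) i
  -- derivative of t ↦ pd V i (q t)
  have key : ∀ (i : Fin N) (t : ℝ),
      HasDerivAt (fun u => pd V i (q u)) (Hvec V i (q t)) t := by
    intro i t
    have hdiff : DifferentiableAt ℝ (pd V i) (q t) :=
      ((pd_contDiff V hV i).differentiable one_ne_zero) _
    have h := hdiff.hasFDerivAt.comp_hasDerivAt t (hq t)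
    have heq : fderiv ℝ (pd V i) (q t) (fun j => pd V j (q t)) = Hvec V i (q t) := by
      rw [fderiv_pd_apply V hV]; rfl
    rw [heq] at h
    exact h
  -- first derivatives
  have hdν : deriv ν = fun t => G (q t) := funext fun t => (hν t).deriv
  have hdqi : ∀ i : Fin N, deriv (fun u => q u i) = fun t => pd V i (q t) :=
    fun i => funext fun t => (hqi i t).deriv
  have hGne : G (q s) ≠ 0 := (hpos (q s)).ne'
  constructor
  · -- ν equation
    have hGd : HasDerivAt (fun t => G (q t))
        (∑ i, 2 * pd V i (q s) ^ 1 * Hvec V i (q s)) s := by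
      rw [hG]
      exact HasDerivAt.fun_sum fun i _ => (key i s).pow 2
    rw [hdν, hGd.deriv]
    simp only [hdqi, pow_one]
    have h2 : (2 / G (q s)) * G (q s) = 2 := div_mul_cancel₀ 2 hGne
    have hsum : (∑ i, 2 * pd V i (q s) * Hvec V i (q s))
        = 2 * ∑ j, pd V j (q s) * Hvec V j (q s) := by
      rw [Finset.mul_sum]
      exact Finset.sum_congr rfl fun i _ => by ring
    rw [h2, hsum]
    ring
  · intro i
    have hd2 : deriv (deriv fun t => q t i) s = Hvec V i (q s) := by
      rw [hdqi i]
      exact (key i s).deriv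
    rw [hd2, hdν]
    field_simp
    ring
end

section
/- For the metric diag(1,…,1,−1/G(q)) with G positive and C², the spatial Ricci components are R_{jk} = −(1/2) ∂/∂q^j ( G ∂(1/G)/∂q^k ) − (1/4) G² (∂(1/G)/∂q^j)(∂(1/G)/∂q^k). -/
open scoped BigOperators

/-- Partial derivative on `ℝ^{N+1}`. -/
noncomputable def pdx {N : ℕ} (f : (Fin (N + 1) → ℝ) → ℝ) (I : Fin (N + 1))
    (x : Fin (N + 1) → ℝ) : ℝ :=
  fderiv ℝ f x (Pi.single I 1)

/-- Covariant metric `diag(1,…,1,−1/G(q))` on `ℝ^{N+1}`. -/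
noncomputable def gcov {N : ℕ} (G : (Fin N → ℝ) → ℝ) (x : Fin (N + 1) → ℝ) :
    Matrix (Fin (N + 1)) (Fin (N + 1)) ℝ :=
  Matrix.diagonal (fun I => if I = Fin.last N then -1 / G (x ∘ Fin.castSucc) else 1)

/-- Contravariant metric `diag(1,…,1,−G(q))` on `ℝ^{N+1}`. -/
noncomputable def gcon {N : ℕ} (G : (Fin N → ℝ) → ℝ) (x : Fin (N + 1) → ℝ) :
    Matrix (Fin (N + 1)) (Fin (N + 1)) ℝ :=
  Matrix.diagonal (fun I => if I = Fin.last N then -G (x ∘ Fin.castSucc) else 1)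

/-- Christoffel symbols of the second kind,
`Γ^I_{JK} = ½ g^{IL}(∂_K g_{LJ} + ∂_J g_{KL} − ∂_L g_{JK})`. -/
noncomputable def Gamma {N : ℕ} (G : (Fin N → ℝ) → ℝ) (I J K : Fin (N + 1))
    (x : Fin (N + 1) → ℝ) : ℝ :=
  (1 / 2) * ∑ L, gcon G x I L *
    (pdx (fun y => gcov G y L J) K x + pdx (fun y => gcov G y K L) J x
      - pdx (fun y => gcov G y J K) L x)

/-- `H_k = ½ ∂G/∂q^k`. -/
noncomputable def Hh {N : ℕ} (G : (Fin N → ℝ) → ℝ) (k : Fin N) (q : Fin N → ℝ) : ℝ :=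
  (1 / 2) * pd G k q

/-- Curvature tensor
`R^L_{IJK} = ∂_I Γ^L_{JK} − ∂_J Γ^L_{IK} − Σ_M (Γ^M_{IK} Γ^L_{JM} − Γ^M_{JK} Γ^L_{IM})`. -/
noncomputable def Riem {N : ℕ} (G : (Fin N → ℝ) → ℝ) (L I J K : Fin (N + 1))
    (x : Fin (N + 1) → ℝ) : ℝ :=
  pdx (fun y => Gamma G L J K y) I x - pdx (fun y => Gamma G L I K y) J x
    - ∑ M, (Gamma G M I K x * Gamma G L J M x - Gamma G M J K x * Gamma G L I M x)

/-- Ricci tensor `R_{JK} = Σ_M R^M_{MJK}`. -/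
noncomputable def Ric {N : ℕ} (G : (Fin N → ℝ) → ℝ) (J K : Fin (N + 1))
    (x : Fin (N + 1) → ℝ) : ℝ :=
  ∑ M, Riem G M M J K x

noncomputable def resL (N : ℕ) : (Fin (N + 1) → ℝ) →L[ℝ] (Fin N → ℝ) :=
  ContinuousLinearMap.pi (fun i => ContinuousLinearMap.proj i.castSucc)

lemma pdx_comp_castSucc {N : ℕ} (f : (Fin N → ℝ) → ℝ) (x : Fin (N + 1) → ℝ)
    (hf : DifferentiableAt ℝ f (x ∘ Fin.castSucc)) (k : Fin N) :
    pdx (fun y => f (y ∘ Fin.castSucc)) k.castSucc x = pd f k (x ∘ Fin.castSucc) := by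
  have h1 : (fun y : Fin (N + 1) → ℝ => f (y ∘ Fin.castSucc)) = f ∘ (resL N) := rfl
  have hf' : DifferentiableAt ℝ f ((resL N) x) := hf
  rw [pdx, h1, fderiv_comp x hf' (resL N).differentiableAt, (resL N).fderiv]
  show fderiv ℝ f ((resL N) x) ((resL N) (Pi.single k.castSucc 1)) = _
  have h3 : (resL N) (Pi.single (Fin.castSucc k) (1:ℝ)) = Pi.single k 1 := by
    funext i
    simp [resL, Pi.single_apply, Fin.castSucc_inj]
  rw [h3]
  rfl

lemma pdx_zero_of_eq_zero {N : ℕ} (f : (Fin (N + 1) → ℝ) → ℝ) (hf : ∀ y, f y = 0)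
    (K : Fin (N + 1)) (x : Fin (N + 1) → ℝ) : pdx f K x = 0 := by
  rw [pdx, funext hf]
  simp

lemma pdx_gcov_eq_zero {N : ℕ} (G : (Fin N → ℝ) → ℝ) (x : Fin (N + 1) → ℝ)
    (L J : Fin (N + 1)) (h : ¬(L = Fin.last N ∧ J = Fin.last N)) (K : Fin (N + 1)) :
    pdx (fun y => gcov G y L J) K x = 0 := by
  have h1 : (fun y : Fin (N + 1) → ℝ => gcov G y L J)
      = fun _ => (if L = J then (1:ℝ) else 0) := by
    funext y
    rcases eq_or_ne L J with hLJ | hLJ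
    · subst hLJ
      have hL : L ≠ Fin.last N := fun hL => h ⟨hL, hL⟩
      simp [gcov, Matrix.diagonal_apply_eq, hL]
    · simp [gcov, Matrix.diagonal_apply_ne _ hLJ, hLJ]
  rw [pdx, h1]
  simp

lemma pdx_gcov_ll_cs {N : ℕ} (G : (Fin N → ℝ) → ℝ)
    (hinv : Differentiable ℝ (fun z => 1 / G z)) (x : Fin (N + 1) → ℝ) (k : Fin N) :
    pdx (fun y => gcov G y (Fin.last N) (Fin.last N)) k.castSucc x
      = - pd (fun z => 1 / G z) k (x ∘ Fin.castSucc) := by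
  have h1 : (fun y : Fin (N + 1) → ℝ => gcov G y (Fin.last N) (Fin.last N))
      = fun y => (fun z => -(1 / G z)) (y ∘ Fin.castSucc) := by
    funext y
    simp [gcov, neg_div]
  rw [h1, pdx_comp_castSucc (fun z => -(1 / G z)) _ (hinv (x ∘ Fin.castSucc)).neg k, pd, fderiv_fun_neg]
  simp [pd]

lemma Gamma_ss {N : ℕ} (G : (Fin N → ℝ) → ℝ) (I : Fin (N + 1)) (j k : Fin N)
    (x : Fin (N + 1) → ℝ) :
    Gamma G I j.castSucc k.castSucc x = 0 := by
  rw [Gamma, Finset.sum_eq_single_of_mem I (Finset.mem_univ I)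
      (fun b _ hb => by simp [gcon, Matrix.diagonal_apply_ne _ (Ne.symm hb)])]
  rw [pdx_gcov_eq_zero G x I j.castSucc (fun h => (Fin.castSucc_lt_last j).ne h.2) k.castSucc,
      pdx_gcov_eq_zero G x k.castSucc I (fun h => (Fin.castSucc_lt_last k).ne h.1) j.castSucc,
      pdx_gcov_eq_zero G x j.castSucc k.castSucc (fun h => (Fin.castSucc_lt_last j).ne h.1) I]
  ring

lemma Gamma_cslcs {N : ℕ} (G : (Fin N → ℝ) → ℝ) (m k : Fin N) (x : Fin (N + 1) → ℝ) :
    Gamma G m.castSucc (Fin.last N) k.castSucc x = 0 := by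
  rw [Gamma, Finset.sum_eq_single_of_mem m.castSucc (Finset.mem_univ _)
      (fun b _ hb => by simp [gcon, Matrix.diagonal_apply_ne _ (Ne.symm hb)])]
  rw [pdx_gcov_eq_zero G x m.castSucc (Fin.last N) (fun h => (Fin.castSucc_lt_last m).ne h.1) k.castSucc,
      pdx_gcov_eq_zero G x k.castSucc m.castSucc (fun h => (Fin.castSucc_lt_last k).ne h.1) (Fin.last N),
      pdx_gcov_eq_zero G x (Fin.last N) k.castSucc (fun h => (Fin.castSucc_lt_last k).ne h.2) m.castSucc]
  ring

lemma Gamma_lls {N : ℕ} (G : (Fin N → ℝ) → ℝ)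
    (hinv : Differentiable ℝ (fun z => 1 / G z)) (k : Fin N) (x : Fin (N + 1) → ℝ) :
    Gamma G (Fin.last N) (Fin.last N) k.castSucc x
      = (1 / 2) * (G (x ∘ Fin.castSucc) * pd (fun z => 1 / G z) k (x ∘ Fin.castSucc)) := by
  rw [Gamma, Finset.sum_eq_single_of_mem (Fin.last N) (Finset.mem_univ _)
      (fun b _ hb => by simp [gcon, Matrix.diagonal_apply_ne _ (Ne.symm hb)])]
  rw [pdx_gcov_ll_cs G hinv x k,
      pdx_gcov_eq_zero G x k.castSucc (Fin.last N) (fun h => (Fin.castSucc_lt_last k).ne h.1) (Fin.last N),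
      pdx_gcov_eq_zero G x (Fin.last N) k.castSucc (fun h => (Fin.castSucc_lt_last k).ne h.2) (Fin.last N)]
  simp [gcon]

lemma Gamma_lcsl {N : ℕ} (G : (Fin N → ℝ) → ℝ)
    (hinv : Differentiable ℝ (fun z => 1 / G z)) (j : Fin N) (x : Fin (N + 1) → ℝ) :
    Gamma G (Fin.last N) j.castSucc (Fin.last N) x
      = (1 / 2) * (G (x ∘ Fin.castSucc) * pd (fun z => 1 / G z) j (x ∘ Fin.castSucc)) := by
  rw [Gamma, Finset.sum_eq_single_of_mem (Fin.last N) (Finset.mem_univ _)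
      (fun b _ hb => by simp [gcon, Matrix.diagonal_apply_ne _ (Ne.symm hb)])]
  rw [pdx_gcov_eq_zero G x (Fin.last N) j.castSucc (fun h => (Fin.castSucc_lt_last j).ne h.2) (Fin.last N),
      pdx_gcov_ll_cs G hinv x j,
      pdx_gcov_eq_zero G x j.castSucc (Fin.last N) (fun h => (Fin.castSucc_lt_last j).ne h.1) (Fin.last N)]
  simp [gcon]

/-- The spatial Ricci components of the metric `diag(1,…,1,−1/G)` are
`R_{jk} = −½ ∂_j(G ∂_k(1/G)) − ¼ G² ∂_j(1/G) ∂_k(1/G)`. -/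
theorem ricci_spatial_of_levelset_metric {N : ℕ} (G : (Fin N → ℝ) → ℝ)
    (hG : ContDiff ℝ 2 G) (hpos : ∀ q, 0 < G q) :
    ∀ (x : Fin (N + 1) → ℝ) (j k : Fin N),
      Ric G j.castSucc k.castSucc x
        = -(1 / 2) * pd (fun y => G y * pd (fun q => 1 / G q) k y) j (x ∘ Fin.castSucc)
          - (1 / 4) * (G (x ∘ Fin.castSucc)) ^ 2
              * pd (fun q => 1 / G q) j (x ∘ Fin.castSucc)
              * pd (fun q => 1 / G q) k (x ∘ Fin.castSucc) := by
  have hGne : ∀ z, G z ≠ 0 := fun z => (hpos z).ne'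
  have hinvC : ContDiff ℝ 2 (fun z => 1 / G z) := by
    exact contDiff_const.div hG hGne
  have hinv : Differentiable ℝ (fun z => 1 / G z) := hinvC.differentiable two_ne_zero
  have hGdiff : Differentiable ℝ G := hG.differentiable two_ne_zero
  have hdC : ∀ k : Fin N, ContDiff ℝ 1 (fun z => pd (fun w => 1 / G w) k z) := by
    intro k
    exact (hinvC.fderiv_right (m := 1) (by norm_num)).clm_apply contDiff_const
  intro x j k
  have hFdiff : DifferentiableAt ℝ (fun z => G z * pd (fun w => 1 / G w) k z)
      (x ∘ Fin.castSucc) :=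
    ((hGdiff _).mul (((hdC k).differentiable one_ne_zero) _))
  have hFdiff2 : DifferentiableAt ℝ (fun z => (1 / 2) * (G z * pd (fun w => 1 / G w) k z))
      (x ∘ Fin.castSucc) := hFdiff.const_mul _
  -- derivative of the nontrivial Christoffel symbol
  have hP1 : pdx (fun y => Gamma G (Fin.last N) (Fin.last N) k.castSucc y) j.castSucc x
      = (1 / 2) * pd (fun z => G z * pd (fun w => 1 / G w) k z) j (x ∘ Fin.castSucc) := by
    have hfun : (fun y => Gamma G (Fin.last N) (Fin.last N) k.castSucc y)
        = fun y => (fun z => (1 / 2) * (G z * pd (fun w => 1 / G w) k z)) (y ∘ Fin.castSucc) :=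
      funext fun y => Gamma_lls G hinv k y
    rw [hfun, pdx_comp_castSucc _ _ hFdiff2 j, pd, fderiv_const_mul hFdiff]
    simp [pd]
  -- spatial Riemann terms vanish
  have hsp : ∀ m : Fin N, Riem G m.castSucc m.castSucc j.castSucc k.castSucc x = 0 := by
    intro m
    rw [Riem,
      pdx_zero_of_eq_zero _ (fun y => Gamma_ss G m.castSucc j k y) _ x,
      pdx_zero_of_eq_zero _ (fun y => Gamma_ss G m.castSucc m k y) _ x]
    simp [Gamma_ss]
  rw [Ric, Fin.sum_univ_castSucc]
  simp only [hsp, Finset.sum_const_zero, zero_add]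
  rw [Riem, pdx_zero_of_eq_zero _ (fun y => Gamma_ss G (Fin.last N) j k y) _ x, hP1]
  simp only [Gamma_ss, zero_mul, mul_zero, sub_zero]
  rw [Fin.sum_univ_castSucc]
  simp only [Gamma_cslcs, zero_mul, Finset.sum_const_zero, zero_add]
  rw [Gamma_lls G hinv k x, Gamma_lcsl G hinv j x]
  ring
end

section
/- For the metric diag(1,…,1,−1/G(q)) with G positive and C², the scalar curvature R = g^{JK} R_{JK} equals Σ_j [ −(3/(2G²)) (∂G/∂q^j)² + (1/G) ∂²G/∂(q^j)² ], equivalently Σ_j [ −6 H_j²/G² + (2/G) ∂H_j/∂q^j ] with H_j = (1/2)∂G/∂q^j. -/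
open scoped BigOperators

namespace SCaux

open Fin

variable {N : ℕ}

/-! ### calculus for `pd` -/

lemma pdx_const (c : ℝ) (I : Fin (N + 1)) (x : Fin (N + 1) → ℝ) :
    pdx (fun _ => c) I x = 0 := by simp [pdx, fderiv_const]

lemma pd_const (c : ℝ) (i : Fin N) (q : Fin N → ℝ) :
    pd (fun _ : Fin N → ℝ => c) i q = 0 := by simp [pd, fderiv_const]

variable {f g : (Fin N → ℝ) → ℝ} {q : Fin N → ℝ} {i : Fin N}

lemma pd_neg (hf : DifferentiableAt ℝ f q) : pd (fun x => -(f x)) i q = -(pd f i q) := by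
  simp [pd, fderiv_neg]

lemma pd_const_mul (c : ℝ) (hf : DifferentiableAt ℝ f q) :
    pd (fun x => c * f x) i q = c * pd f i q := by
  simp [pd, fderiv_const_mul hf]

lemma pd_mul (hf : DifferentiableAt ℝ f q) (hg : DifferentiableAt ℝ g q) :
    pd (fun x => f x * g x) i q = pd f i q * g q + f q * pd g i q := by
  simp [pd, fderiv_fun_mul hf hg]; ring

lemma pd_inv (hf : DifferentiableAt ℝ f q) (h0 : f q ≠ 0) :
    pd (fun x => (f x)⁻¹) i q = -(pd f i q) / (f q) ^ 2 := by
  have h1 : DifferentiableAt ℝ (fun y : ℝ => y⁻¹) (f q) := differentiableAt_inv h0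
  have h2 : (fun x => (f x)⁻¹) = (fun y : ℝ => y⁻¹) ∘ f := rfl
  rw [pd, h2, fderiv_comp q h1 hf]
  simp [fderiv_inv, pd]
  ring

lemma pd_div (hf : DifferentiableAt ℝ f q) (hg : DifferentiableAt ℝ g q) (h0 : g q ≠ 0) :
    pd (fun x => f x / g x) i q = (pd f i q * g q - f q * pd g i q) / (g q) ^ 2 := by
  have h2 : (fun x => f x / g x) = fun x => f x * (g x)⁻¹ := by
    funext x; rw [div_eq_mul_inv]
  rw [h2, pd_mul (g := fun x => (g x)⁻¹) hf (hg.inv h0), pd_inv hg h0]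
  field_simp
  ring

lemma pd_sq (hf : DifferentiableAt ℝ f q) :
    pd (fun x => (f x) ^ 2) i q = 2 * f q * pd f i q := by
  have h2 : (fun x => (f x) ^ 2) = fun x => f x * f x := by funext x; ring
  rw [h2, pd_mul hf hf]; ring

/-! ### the projection `ℝ^{N+1} → ℝ^N` -/

noncomputable def Lmap (N : ℕ) : (Fin (N + 1) → ℝ) →L[ℝ] (Fin N → ℝ) :=
  ContinuousLinearMap.pi fun i => ContinuousLinearMap.proj (Fin.castSucc i)

lemma Lmap_apply (x : Fin (N + 1) → ℝ) : Lmap N x = x ∘ Fin.castSucc := rfl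

lemma csne (i : Fin N) : Fin.castSucc i ≠ Fin.last N :=
  Fin.ne_last_of_lt (Fin.castSucc_lt_last i)

lemma Lmap_single_last : Lmap N (Pi.single (Fin.last N) 1) = 0 := by
  funext i
  simp [Lmap_apply, Function.comp, Pi.single_apply, csne i]

lemma Lmap_single_cs (i : Fin N) :
    Lmap N (Pi.single (Fin.castSucc i) 1) = Pi.single i 1 := by
  funext j
  simp [Lmap_apply, Function.comp, Pi.single_apply, Fin.castSucc_inj]

lemma fderiv_compL {x : Fin (N + 1) → ℝ}
    (hf : DifferentiableAt ℝ f (x ∘ Fin.castSucc)) (v : Fin (N + 1) → ℝ) :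
    fderiv ℝ (fun y => f (y ∘ Fin.castSucc)) x v
      = fderiv ℝ f (x ∘ Fin.castSucc) (Lmap N v) := by
  have h1 : (fun y : Fin (N + 1) → ℝ => f (y ∘ Fin.castSucc)) = f ∘ (Lmap N) := rfl
  have h2 : DifferentiableAt ℝ f (Lmap N x) := by rwa [Lmap_apply]
  rw [h1, fderiv_comp x h2 (Lmap N).differentiableAt, (Lmap N).fderiv]
  simp [Lmap_apply]

lemma pdx_comp_last {x : Fin (N + 1) → ℝ}
    (hf : DifferentiableAt ℝ f (x ∘ Fin.castSucc)) :
    pdx (fun y => f (y ∘ Fin.castSucc)) (Fin.last N) x = 0 := by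
  rw [pdx, fderiv_compL hf, Lmap_single_last, map_zero]

lemma pdx_comp_cs {x : Fin (N + 1) → ℝ}
    (hf : DifferentiableAt ℝ f (x ∘ Fin.castSucc)) (i : Fin N) :
    pdx (fun y => f (y ∘ Fin.castSucc)) (Fin.castSucc i) x = pd f i (x ∘ Fin.castSucc) := by
  rw [pdx, fderiv_compL hf, Lmap_single_cs, pd]

variable {G : (Fin N → ℝ) → ℝ}

lemma G_diff (hG : ContDiff ℝ 2 G) : Differentiable ℝ G :=
  hG.differentiable (by norm_num)

lemma pd_differentiable (hG : ContDiff ℝ 2 G) (k : Fin N) :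
    Differentiable ℝ (pd G k) := by
  have h1 : ContDiff ℝ 1 (fderiv ℝ G) := hG.fderiv_right (by norm_num)
  have h2 : ContDiff ℝ 1 (fun q => fderiv ℝ G q (Pi.single k 1)) :=
    h1.clm_apply contDiff_const
  exact h2.differentiable one_ne_zero

lemma pd2_eq (j k : Fin N) (q : Fin N → ℝ) : pd2 G j k q = pd (pd G k) j q := rfl

/-! ### derivatives of the metric -/

lemma negInvG_diffAt (hG : ContDiff ℝ 2 G) (hpos : ∀ q, 0 < G q) (r : Fin N → ℝ) :
    DifferentiableAt ℝ (fun r => -1 / G r) r := by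
  have h : (fun r : Fin N → ℝ => -1 / G r) = fun r => -((G r)⁻¹) := by
    funext r; rw [neg_div, one_div]
  rw [h]
  exact (((G_diff hG) r).inv (hpos r).ne').neg


lemma pdx_gcov_last (hG : ContDiff ℝ 2 G) (hpos : ∀ q, 0 < G q)
    (A B : Fin (N + 1)) (x : Fin (N + 1) → ℝ) :
    pdx (fun y => gcov G y A B) (Fin.last N) x = 0 := by
  by_cases hAB : A = B
  · subst hAB
    by_cases hA : A = Fin.last N
    · subst hA
      have h2 : (fun y : Fin (N + 1) → ℝ => gcov G y (Fin.last N) (Fin.last N))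
          = fun y => (fun r => -1 / G r) (y ∘ Fin.castSucc) := by
        funext y; simp [gcov]
      rw [h2]
      exact pdx_comp_last (negInvG_diffAt hG hpos _)
    · have h2 : (fun y : Fin (N + 1) → ℝ => gcov G y A A) = fun _ => (1 : ℝ) := by
        funext y; simp [gcov, Matrix.diagonal_apply_eq, hA]
      rw [h2, pdx_const]
  · have h2 : (fun y : Fin (N + 1) → ℝ => gcov G y A B) = fun _ => (0 : ℝ) := by
      funext y; exact Matrix.diagonal_apply_ne _ hAB
    rw [h2, pdx_const]

lemma pdx_gcov_cs (hG : ContDiff ℝ 2 G) (hpos : ∀ q, 0 < G q)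
    (A B : Fin (N + 1)) (i : Fin N) (x : Fin (N + 1) → ℝ) :
    pdx (fun y => gcov G y A B) (Fin.castSucc i) x
      = if A = Fin.last N ∧ B = Fin.last N then
          pd G i (x ∘ Fin.castSucc) / (G (x ∘ Fin.castSucc)) ^ 2 else 0 := by
  by_cases hAB : A = B
  · subst hAB
    by_cases hA : A = Fin.last N
    · subst hA
      rw [if_pos ⟨rfl, rfl⟩]
      have h2 : (fun y : Fin (N + 1) → ℝ => gcov G y (Fin.last N) (Fin.last N))
          = fun y => (fun r => -1 / G r) (y ∘ Fin.castSucc) := by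
        funext y; simp [gcov]
      rw [h2, pdx_comp_cs (negInvG_diffAt hG hpos _)]
      rw [show (fun r => -1 / G r) = (fun r => (-1 : ℝ) / G r) from rfl,
        pd_div (differentiableAt_const _) ((G_diff hG) _) (hpos _).ne', pd_const]
      ring
    · rw [if_neg (fun h => hA h.1)]
      have h2 : (fun y : Fin (N + 1) → ℝ => gcov G y A A) = fun _ => (1 : ℝ) := by
        funext y; simp [gcov, Matrix.diagonal_apply_eq, hA]
      rw [h2, pdx_const]
  · rw [if_neg (fun h => hAB (h.1.trans h.2.symm))]
    have h2 : (fun y : Fin (N + 1) → ℝ => gcov G y A B) = fun _ => (0 : ℝ) := by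
      funext y; exact Matrix.diagonal_apply_ne _ hAB
    rw [h2, pdx_const]


/-! ### closed form of the Christoffel symbols -/

noncomputable def Gam (G : (Fin N → ℝ) → ℝ) (I J K : Fin (N + 1)) (q : Fin N → ℝ) : ℝ :=
  if hI : I = Fin.last N then
    if hJ : J = Fin.last N then
      if hK : K = Fin.last N then 0
      else -(pd G (K.castPred hK) q) / (2 * G q)
    else
      if K = Fin.last N then -(pd G (J.castPred hJ) q) / (2 * G q) else 0
  else
    if J = Fin.last N ∧ K = Fin.last N then
      -(pd G (I.castPred hI) q) / (2 * (G q) ^ 2)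
    else 0

noncomputable def GamD (G : (Fin N → ℝ) → ℝ) (I J K : Fin (N + 1)) (i : Fin N)
    (q : Fin N → ℝ) : ℝ :=
  if hI : I = Fin.last N then
    if hJ : J = Fin.last N then
      if hK : K = Fin.last N then 0
      else -(pd2 G i (K.castPred hK) q) / (2 * G q)
            + pd G (K.castPred hK) q * pd G i q / (2 * (G q) ^ 2)
    else
      if K = Fin.last N then
        -(pd2 G i (J.castPred hJ) q) / (2 * G q)
            + pd G (J.castPred hJ) q * pd G i q / (2 * (G q) ^ 2)
      else 0
  else
    if J = Fin.last N ∧ K = Fin.last N then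
      -(pd2 G i (I.castPred hI) q) / (2 * (G q) ^ 2)
          + pd G (I.castPred hI) q * pd G i q / (G q) ^ 3
    else 0

section GamLemmas
variable (G) (q : Fin N → ℝ) (i j k : Fin N)

lemma Gam_lll : Gam G (Fin.last N) (Fin.last N) (Fin.last N) q = 0 := by simp [Gam]

lemma Gam_llc : Gam G (Fin.last N) (Fin.last N) (Fin.castSucc k) q
    = -(pd G k q) / (2 * G q) := by simp [Gam, csne]

lemma Gam_lcl : Gam G (Fin.last N) (Fin.castSucc j) (Fin.last N) q
    = -(pd G j q) / (2 * G q) := by simp [Gam, csne]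

lemma Gam_lcc : Gam G (Fin.last N) (Fin.castSucc j) (Fin.castSucc k) q = 0 := by
  simp [Gam, csne]

lemma Gam_cll : Gam G (Fin.castSucc i) (Fin.last N) (Fin.last N) q
    = -(pd G i q) / (2 * (G q) ^ 2) := by simp [Gam, csne]

lemma Gam_c_cs {K : Fin (N + 1)} : Gam G (Fin.castSucc i) (Fin.castSucc j) K q = 0 := by
  simp [Gam, csne]

lemma Gam_cs_c {J : Fin (N + 1)} : Gam G (Fin.castSucc i) J (Fin.castSucc k) q = 0 := by
  simp [Gam, csne]

lemma GamD_lll : GamD G (Fin.last N) (Fin.last N) (Fin.last N) i q = 0 := by simp [GamD]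

lemma GamD_llc : GamD G (Fin.last N) (Fin.last N) (Fin.castSucc k) i q
    = -(pd2 G i k q) / (2 * G q) + pd G k q * pd G i q / (2 * (G q) ^ 2) := by
  simp [GamD, csne]

lemma GamD_lcl : GamD G (Fin.last N) (Fin.castSucc j) (Fin.last N) i q
    = -(pd2 G i j q) / (2 * G q) + pd G j q * pd G i q / (2 * (G q) ^ 2) := by
  simp [GamD, csne]

lemma GamD_lcc : GamD G (Fin.last N) (Fin.castSucc j) (Fin.castSucc k) i q = 0 := by
  simp [GamD, csne]

lemma GamD_cll : GamD G (Fin.castSucc j) (Fin.last N) (Fin.last N) i q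
    = -(pd2 G i j q) / (2 * (G q) ^ 2) + pd G j q * pd G i q / (G q) ^ 3 := by
  simp [GamD, csne]

lemma GamD_c_cs {K : Fin (N + 1)} (d : Fin N) :
    GamD G (Fin.castSucc i) (Fin.castSucc j) K d q = 0 := by simp [GamD, csne]

lemma GamD_cs_c {J : Fin (N + 1)} (d : Fin N) :
    GamD G (Fin.castSucc i) J (Fin.castSucc k) d q = 0 := by simp [GamD, csne]

end GamLemmas

/-! ### `Gamma` in closed form -/

lemma diff_div_aux {f g : (Fin N → ℝ) → ℝ} (hf : Differentiable ℝ f)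
    (hg : Differentiable ℝ g) (h0 : ∀ r, g r ≠ 0) :
    Differentiable ℝ (fun r => f r / g r) := by
  have h : (fun r => f r / g r) = fun r => f r * (g r)⁻¹ := by
    funext r; rw [div_eq_mul_inv]
  rw [h]; exact hf.mul (hg.inv h0)

lemma Gam_diff (hG : ContDiff ℝ 2 G) (hpos : ∀ q, 0 < G q) (L J K : Fin (N + 1)) :
    Differentiable ℝ (Gam G L J K) := by
  have hGd := G_diff hG
  have h2 : ∀ r : Fin N → ℝ, 2 * G r ≠ 0 := fun r => by have := hpos r; positivity
  have h2' : ∀ r : Fin N → ℝ, 2 * (G r) ^ 2 ≠ 0 := fun r => by have := hpos r; positivity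
  rcases Fin.eq_castSucc_or_eq_last L with ⟨l, rfl⟩ | rfl <;>
    rcases Fin.eq_castSucc_or_eq_last J with ⟨j, rfl⟩ | rfl <;>
      rcases Fin.eq_castSucc_or_eq_last K with ⟨k, rfl⟩ | rfl
  · have h : Gam G l.castSucc j.castSucc k.castSucc = fun _ => (0:ℝ) := by
      funext r; simp [Gam, csne]
    rw [h]; exact differentiable_const 0
  · have h : Gam G l.castSucc j.castSucc (Fin.last N) = fun _ => (0:ℝ) := by
      funext r; simp [Gam, csne]
    rw [h]; exact differentiable_const 0
  · have h : Gam G l.castSucc (Fin.last N) k.castSucc = fun _ => (0:ℝ) := by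
      funext r; simp [Gam, csne]
    rw [h]; exact differentiable_const 0
  · have h : Gam G l.castSucc (Fin.last N) (Fin.last N)
        = fun r => -(pd G l r) / (2 * (G r) ^ 2) := by
      funext r; simp [Gam, csne]
    rw [h]
    exact diff_div_aux (pd_differentiable hG l).neg ((hGd.pow 2).const_mul 2) h2'
  · have h : Gam G (Fin.last N) j.castSucc k.castSucc = fun _ => (0:ℝ) := by
      funext r; simp [Gam, csne]
    rw [h]; exact differentiable_const 0
  · have h : Gam G (Fin.last N) j.castSucc (Fin.last N)
        = fun r => -(pd G j r) / (2 * G r) := by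
      funext r; simp [Gam, csne]
    rw [h]
    exact diff_div_aux (pd_differentiable hG j).neg (hGd.const_mul 2) h2
  · have h : Gam G (Fin.last N) (Fin.last N) k.castSucc
        = fun r => -(pd G k r) / (2 * G r) := by
      funext r; simp [Gam, csne]
    rw [h]
    exact diff_div_aux (pd_differentiable hG k).neg (hGd.const_mul 2) h2
  · have h : Gam G (Fin.last N) (Fin.last N) (Fin.last N) = fun _ => (0:ℝ) := by
      funext r; simp [Gam]
    rw [h]; exact differentiable_const 0

lemma pd_Gam (hG : ContDiff ℝ 2 G) (hpos : ∀ q, 0 < G q) (L J K : Fin (N + 1))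
    (i : Fin N) (q : Fin N → ℝ) :
    pd (Gam G L J K) i q = GamD G L J K i q := by
  have hGd := G_diff hG
  have hne := (hpos q).ne'
  have h2 : (2 : ℝ) * G q ≠ 0 := by have := hpos q; positivity
  have h2' : (2 : ℝ) * (G q) ^ 2 ≠ 0 := by have := hpos q; positivity
  rcases Fin.eq_castSucc_or_eq_last L with ⟨l, rfl⟩ | rfl <;>
    rcases Fin.eq_castSucc_or_eq_last J with ⟨j, rfl⟩ | rfl <;>
      rcases Fin.eq_castSucc_or_eq_last K with ⟨k, rfl⟩ | rfl
  · have h : Gam G l.castSucc j.castSucc k.castSucc = fun _ => (0:ℝ) := by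
      funext r; simp [Gam, csne]
    rw [h, pd_const, GamD_c_cs]
  · have h : Gam G l.castSucc j.castSucc (Fin.last N) = fun _ => (0:ℝ) := by
      funext r; simp [Gam, csne]
    rw [h, pd_const, GamD_c_cs]
  · have h : Gam G l.castSucc (Fin.last N) k.castSucc = fun _ => (0:ℝ) := by
      funext r; simp [Gam, csne]
    rw [h, pd_const, GamD_cs_c]
  · have h : Gam G l.castSucc (Fin.last N) (Fin.last N)
        = fun r => -(pd G l r) / (2 * (G r) ^ 2) := by
      funext r; simp [Gam, csne]
    rw [h, GamD_cll,
      pd_div (f := fun r => -(pd G l r)) (g := fun r => 2 * (G r) ^ 2)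
        ((pd_differentiable hG l) q).neg ((hGd.pow 2).const_mul 2).differentiableAt h2',
      pd_neg ((pd_differentiable hG l) q), pd_const_mul (f := fun r => (G r) ^ 2) 2 ((hGd q).pow 2),
      pd_sq (hGd q), pd2_eq]
    field_simp
    ring
  · have h : Gam G (Fin.last N) j.castSucc k.castSucc = fun _ => (0:ℝ) := by
      funext r; simp [Gam, csne]
    rw [h, pd_const, GamD_lcc]
  · have h : Gam G (Fin.last N) j.castSucc (Fin.last N)
        = fun r => -(pd G j r) / (2 * G r) := by
      funext r; simp [Gam, csne]
    rw [h, GamD_lcl,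
      pd_div (f := fun r => -(pd G j r)) (g := fun r => 2 * G r)
        ((pd_differentiable hG j) q).neg ((hGd q).const_mul 2) h2,
      pd_neg ((pd_differentiable hG j) q), pd_const_mul 2 (hGd q), pd2_eq]
    field_simp
    ring
  · have h : Gam G (Fin.last N) (Fin.last N) k.castSucc
        = fun r => -(pd G k r) / (2 * G r) := by
      funext r; simp [Gam, csne]
    rw [h, GamD_llc,
      pd_div (f := fun r => -(pd G k r)) (g := fun r => 2 * G r)
        ((pd_differentiable hG k) q).neg ((hGd q).const_mul 2) h2,
      pd_neg ((pd_differentiable hG k) q), pd_const_mul 2 (hGd q), pd2_eq]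
    field_simp
    ring
  · have h : Gam G (Fin.last N) (Fin.last N) (Fin.last N) = fun _ => (0:ℝ) := by
      funext r; simp [Gam]
    rw [h, pd_const, GamD_lll]

lemma Gamma_eq (hG : ContDiff ℝ 2 G) (hpos : ∀ q, 0 < G q) (I J K : Fin (N + 1))
    (y : Fin (N + 1) → ℝ) :
    Gamma G I J K y = Gam G I J K (y ∘ Fin.castSucc) := by
  have hne := (hpos (y ∘ Fin.castSucc)).ne'
  rw [Gamma, Finset.sum_eq_single I
    (fun b _ hb => by rw [gcon, Matrix.diagonal_apply_ne _ (Ne.symm hb), zero_mul])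
    (fun h => absurd (Finset.mem_univ I) h)]
  rcases Fin.eq_castSucc_or_eq_last I with ⟨i, rfl⟩ | rfl <;>
    rcases Fin.eq_castSucc_or_eq_last J with ⟨j, rfl⟩ | rfl <;>
      rcases Fin.eq_castSucc_or_eq_last K with ⟨k, rfl⟩ | rfl <;>
    simp [gcon, csne, pdx_gcov_last hG hpos, pdx_gcov_cs hG hpos, Gam,
      Fin.castPred_castSucc] <;>
    field_simp <;>
    ring

lemma pdx_Gamma_cs (hG : ContDiff ℝ 2 G) (hpos : ∀ q, 0 < G q) (L J K : Fin (N + 1))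
    (i : Fin N) (x : Fin (N + 1) → ℝ) :
    pdx (fun y => Gamma G L J K y) (Fin.castSucc i) x
      = GamD G L J K i (x ∘ Fin.castSucc) := by
  have h : (fun y => Gamma G L J K y) = fun y => Gam G L J K (y ∘ Fin.castSucc) :=
    funext fun y => Gamma_eq hG hpos L J K y
  rw [h, pdx_comp_cs ((Gam_diff hG hpos L J K) _), pd_Gam hG hpos]

lemma pdx_Gamma_last (hG : ContDiff ℝ 2 G) (hpos : ∀ q, 0 < G q) (L J K : Fin (N + 1))
    (x : Fin (N + 1) → ℝ) :
    pdx (fun y => Gamma G L J K y) (Fin.last N) x = 0 := by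
  have h : (fun y => Gamma G L J K y) = fun y => Gam G L J K (y ∘ Fin.castSucc) :=
    funext fun y => Gamma_eq hG hpos L J K y
  rw [h, pdx_comp_last ((Gam_diff hG hpos L J K) _)]

/-! ### the Ricci tensor -/

lemma Ric_cs (hG : ContDiff ℝ 2 G) (hpos : ∀ q, 0 < G q) (j : Fin N)
    (x : Fin (N + 1) → ℝ) :
    Ric G (Fin.castSucc j) (Fin.castSucc j) x
      = pd2 G j j (x ∘ Fin.castSucc) / (2 * G (x ∘ Fin.castSucc))
        - 3 * (pd G j (x ∘ Fin.castSucc)) ^ 2 / (4 * (G (x ∘ Fin.castSucc)) ^ 2) := by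
  have hne := (hpos (x ∘ Fin.castSucc)).ne'
  rw [Ric, Fin.sum_univ_castSucc]
  have hm : ∀ m : Fin N,
      Riem G m.castSucc m.castSucc j.castSucc j.castSucc x = 0 := by
    intro m
    rw [Riem, pdx_Gamma_cs hG hpos, pdx_Gamma_cs hG hpos]
    simp only [Gamma_eq hG hpos]
    rw [Fin.sum_univ_castSucc]
    simp [Gam_c_cs, Gam_cs_c, Gam_lcc, GamD_c_cs, GamD_cs_c]
  rw [Riem, pdx_Gamma_last hG hpos, pdx_Gamma_cs hG hpos]
  simp only [Gamma_eq hG hpos, hm]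
  rw [Fin.sum_univ_castSucc]
  simp [Gam_llc, Gam_lcl, Gam_lcc, Gam_lll, Gam_c_cs, Gam_cs_c, GamD_llc]
  field_simp
  ring

lemma Ric_last (hG : ContDiff ℝ 2 G) (hpos : ∀ q, 0 < G q) (x : Fin (N + 1) → ℝ) :
    Ric G (Fin.last N) (Fin.last N) x
      = ∑ m : Fin N,
          (-(pd2 G m m (x ∘ Fin.castSucc)) / (2 * (G (x ∘ Fin.castSucc)) ^ 2)
            + 3 * (pd G m (x ∘ Fin.castSucc)) ^ 2 / (4 * (G (x ∘ Fin.castSucc)) ^ 3)) := by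
  have hne := (hpos (x ∘ Fin.castSucc)).ne'
  rw [Ric, Fin.sum_univ_castSucc]
  have hlast : Riem G (Fin.last N) (Fin.last N) (Fin.last N) (Fin.last N) x = 0 := by
    rw [Riem]; simp
  rw [hlast, add_zero]
  refine Finset.sum_congr rfl fun m _ => ?_
  rw [Riem, pdx_Gamma_cs hG hpos, pdx_Gamma_last hG hpos]
  simp only [Gamma_eq hG hpos]
  rw [Fin.sum_univ_castSucc]
  simp [Gam_c_cs, Gam_cs_c, Gam_lcl, Gam_cll, Gam_lll, GamD_cll]
  field_simp
  ring

end SCaux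

/-- The scalar curvature `R = g^{JK} R_{JK}` of the metric `diag(1,…,1,−1/G)` equals
`Σ_j [ −3/(2G²) (∂_j G)² + (1/G) ∂²_j G ]`, equivalently
`Σ_j [ −6 H_j²/G² + (2/G) ∂_j H_j ]` with `H_j = ½ ∂_j G`. -/
theorem scalar_curvature_of_levelset_metric {N : ℕ} (G : (Fin N → ℝ) → ℝ)
    (hG : ContDiff ℝ 2 G) (hpos : ∀ q, 0 < G q) :
    ∀ x : Fin (N + 1) → ℝ,
      (∑ J, ∑ K, gcon G x J K * Ric G J K x)
          = ∑ j : Fin N,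
              (-(3 / (2 * (G (x ∘ Fin.castSucc)) ^ 2)) * (pd G j (x ∘ Fin.castSucc)) ^ 2
                + (1 / G (x ∘ Fin.castSucc)) * pd2 G j j (x ∘ Fin.castSucc)) ∧
      (∑ J, ∑ K, gcon G x J K * Ric G J K x)
          = ∑ j : Fin N,
              (-6 * (Hh G j (x ∘ Fin.castSucc)) ^ 2 / (G (x ∘ Fin.castSucc)) ^ 2
                + (2 / G (x ∘ Fin.castSucc)) * pd (fun y => Hh G j y) j (x ∘ Fin.castSucc)) := by
  intro x
  have h0 : G (x ∘ Fin.castSucc) ≠ 0 := (hpos _).ne'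
  have key : (∑ J, ∑ K, gcon G x J K * Ric G J K x)
      = ∑ j : Fin N,
          (-(3 / (2 * (G (x ∘ Fin.castSucc)) ^ 2)) * (pd G j (x ∘ Fin.castSucc)) ^ 2
            + (1 / G (x ∘ Fin.castSucc)) * pd2 G j j (x ∘ Fin.castSucc)) := by
    have hdiag : ∀ J : Fin (N + 1),
        (∑ K, gcon G x J K * Ric G J K x) = gcon G x J J * Ric G J J x := fun J =>
      Finset.sum_eq_single J
        (fun b _ hb => by rw [gcon, Matrix.diagonal_apply_ne _ (Ne.symm hb), zero_mul])
        (fun h => absurd (Finset.mem_univ J) h)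
    have hg1 : ∀ j : Fin N, gcon G x j.castSucc j.castSucc = 1 := fun j => by
      simp [gcon, SCaux.csne]
    have hg2 : gcon G x (Fin.last N) (Fin.last N) = -(G (x ∘ Fin.castSucc)) := by
      simp [gcon]
    calc (∑ J, ∑ K, gcon G x J K * Ric G J K x)
        = ∑ J, gcon G x J J * Ric G J J x := Finset.sum_congr rfl fun J _ => hdiag J
      _ = (∑ j : Fin N, gcon G x j.castSucc j.castSucc * Ric G j.castSucc j.castSucc x)
            + gcon G x (Fin.last N) (Fin.last N) * Ric G (Fin.last N) (Fin.last N) x :=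
          Fin.sum_univ_castSucc _
      _ = (∑ j : Fin N,
              (pd2 G j j (x ∘ Fin.castSucc) / (2 * G (x ∘ Fin.castSucc))
                - 3 * (pd G j (x ∘ Fin.castSucc)) ^ 2 / (4 * (G (x ∘ Fin.castSucc)) ^ 2)))
            + ∑ j : Fin N, (-(G (x ∘ Fin.castSucc)))
              * (-(pd2 G j j (x ∘ Fin.castSucc)) / (2 * (G (x ∘ Fin.castSucc)) ^ 2)
                + 3 * (pd G j (x ∘ Fin.castSucc)) ^ 2 / (4 * (G (x ∘ Fin.castSucc)) ^ 3)) := by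
          rw [SCaux.Ric_last hG hpos, hg2, Finset.mul_sum]
          congr 1
          refine Finset.sum_congr rfl fun j _ => ?_
          rw [hg1 j, SCaux.Ric_cs hG hpos, one_mul]
      _ = ∑ j : Fin N,
              (-(3 / (2 * (G (x ∘ Fin.castSucc)) ^ 2)) * (pd G j (x ∘ Fin.castSucc)) ^ 2
                + (1 / G (x ∘ Fin.castSucc)) * pd2 G j j (x ∘ Fin.castSucc)) := by
          rw [← Finset.sum_add_distrib]
          refine Finset.sum_congr rfl fun j _ => ?_
          field_simp
          ring
  refine ⟨key, key.trans (Finset.sum_congr rfl fun j _ => ?_)⟩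
  have hH : pd (fun y => Hh G j y) j (x ∘ Fin.castSucc)
      = (1 / 2) * pd2 G j j (x ∘ Fin.castSucc) := by
    have h1 : (fun y => Hh G j y) = fun y => (1 / 2 : ℝ) * pd G j y := rfl
    rw [h1, SCaux.pd_const_mul (1 / 2) ((SCaux.pd_differentiable hG j) _), SCaux.pd2_eq]
  rw [hH, Hh]
  field_simp
  ring
end
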